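/- Let E be a directed graph in which no cycle has an entrance, and let x be an infinite path in E. Then either the edges x(0), x(1), x(2), … are pairwise distinct, or there exists a unique pair (n, p) ∈ ℕ × ℕ with p ≥ 1 such that x(n+p+i) = x(n+i) for all i ∈ ℕ and the edges x(0), …, x(n+p−1) are pairwise distinct. -/
import Mathlib


/-- An infinite path in the directed graph with edge set `E` and
range/source maps `r, s : E → V`. -/
def IsInfinitePath {V E : Type*} (r s : E → V) (x : ℕ → E) : Prop :=
  ∀ i : ℕ, s (x i) = r (x (i + 1))

/-- `e 0, …, e (p-1)` is a cycle of length `p ≥ 1`. -/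
def IsCycle {V E : Type*} (r s : E → V) (p : ℕ) (e : ℕ → E) : Prop :=
  1 ≤ p ∧ (∀ i : ℕ, i + 1 < p → s (e i) = r (e (i + 1))) ∧ s (e (p - 1)) = r (e 0)

/-- The cycle `e 0, …, e (p-1)` has an entrance. -/
def CycleHasEntrance {V E : Type*} (r s : E → V) (p : ℕ) (e : ℕ → E) : Prop :=
  ∃ i < p, ∃ f : E, f ≠ e i ∧ r f = r (e i)

/-- No cycle in the graph has an entrance. -/
def NoCycleHasEntrance {V E : Type*} (r s : E → V) : Prop :=
  ∀ (p : ℕ) (e : ℕ → E), IsCycle r s p e → ¬ CycleHasEntrance r s p e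

lemma key_periodic {V E : Type*} (r s : E → V) (hnc : NoCycleHasEntrance r s)
    (x : ℕ → E) (hx : IsInfinitePath r s x) (j p : ℕ) (hp : 1 ≤ p)
    (hjp : x j = x (j + p)) : ∀ i, x (j + i) = x (j + i % p) := by
  have hcyc : IsCycle r s p (fun m => x (j + m)) := by
    refine ⟨hp, fun i hi => ?_, ?_⟩
    · simpa [add_assoc] using hx (j + i)
    · have h1 : j + (p - 1) + 1 = j + p := by omega
      have h2 := hx (j + (p - 1))
      rw [h1, ← hjp] at h2
      simpa using h2
  have hne : ∀ i < p, ∀ f : E, r f = r (x (j + i)) → f = x (j + i) := by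
    intro i hi f hf
    by_contra hcon
    exact hnc p _ hcyc ⟨i, hi, f, hcon, hf⟩
  intro i
  induction i with
  | zero => simp [Nat.zero_mod]
  | succ i ih =>
    have hlt : (i + 1) % p < p := Nat.mod_lt _ (by omega)
    have e1 : s (x (j + i)) = r (x (j + (i + 1))) := by
      simpa [add_assoc] using hx (j + i)
    have e2 : s (x (j + i % p)) = r (x (j + (i + 1) % p)) := by
      rcases Nat.lt_or_ge (i % p + 1) p with h | h
      · have : (i + 1) % p = i % p + 1 := by
          have hp2 : 2 ≤ p := by
            rcases Nat.lt_or_ge p 2 with h' | h'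
            · interval_cases p <;> omega
            · exact h'
          rw [Nat.add_mod, Nat.one_mod_eq_one.mpr (by omega), Nat.mod_eq_of_lt h]
        rw [this]
        simpa [add_assoc] using hx (j + i % p)
      · have hpm : i % p = p - 1 := by
          have := Nat.mod_lt i (show 0 < p by omega)
          omega
        have : (i + 1) % p = 0 := by
          rcases Nat.eq_or_lt_of_le hp with h1 | h1
          · rw [← h1]; omega
          · rw [Nat.add_mod, hpm, Nat.one_mod_eq_one.mpr (by omega),
              Nat.sub_add_cancel hp, Nat.mod_self]
        rw [this, hpm]
        have h2 := hx (j + (p - 1))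
        have h1 : j + (p - 1) + 1 = j + p := by omega
        rw [h1, ← hjp] at h2
        simpa using h2
    have hr : r (x (j + (i + 1))) = r (x (j + (i + 1) % p)) := by
      rw [← e1, ih, e2]
    exact hne _ hlt _ hr

/-- In a graph in which no cycle has an entrance, every infinite path either
has pairwise distinct edges, or is eventually periodic with unique data
`(n, p)`, `p ≥ 1`, such that the first `n + p` edges are pairwise distinct. -/
theorem infinitePath_injective_or_eventuallyPeriodic
    {V E : Type*} (r s : E → V) (hnc : NoCycleHasEntrance r s)
    (x : ℕ → E) (hx : IsInfinitePath r s x) :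
    Function.Injective x ∨
      ∃! np : ℕ × ℕ, 1 ≤ np.2 ∧
        (∀ i : ℕ, x (np.1 + np.2 + i) = x (np.1 + i)) ∧
        Set.InjOn x (Set.Iio (np.1 + np.2)) := by
  classical
  by_cases hinj : Function.Injective x
  · exact Or.inl hinj
  right
  have hex : ∃ b, ∃ a, a < b ∧ x a = x b := by
    simp only [Function.Injective] at hinj
    push_neg at hinj
    obtain ⟨a, b, hab, hne⟩ := hinj
    rcases lt_or_gt_of_ne hne with h | h
    · exact ⟨b, a, h, hab⟩
    · exact ⟨a, b, h, hab.symm⟩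
  set b := Nat.find hex with hb
  obtain ⟨a, hab, hxab⟩ := Nat.find_spec hex
  have hInj : Set.InjOn x (Set.Iio b) := by
    intro u hu v hv huv
    by_contra hcon
    rcases lt_or_gt_of_ne hcon with h | h
    · exact (Nat.find_min hex (Set.mem_Iio.mp hv)) ⟨u, h, huv⟩
    · exact (Nat.find_min hex (Set.mem_Iio.mp hu)) ⟨v, h, huv.symm⟩
  have hper : ∀ j q, 1 ≤ q → x j = x (j + q) → ∀ i, x (j + q + i) = x (j + i) := by
    intro j q hq hjq i
    have h1 := key_periodic r s hnc x hx j q hq hjq i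
    have h2 := key_periodic r s hnc x hx j q hq hjq (q + i)
    have h3 : j + q + i = j + (q + i) := by omega
    have h4 : (q + i) % q = i % q := Nat.add_mod_left q i
    rw [h3, h2, h4, ← h1]
  have hab' : x a = x (a + (b - a)) := by
    have : a + (b - a) = b := by omega
    rw [this]; exact hxab
  refine ⟨(a, b - a), ⟨by omega, ?_, ?_⟩, ?_⟩
  · exact hper a (b - a) (by omega) hab'
  · have : a + (b - a) = b := by omega
    rw [this]; exact hInj
  · rintro ⟨n, p⟩ ⟨hp1, hp2, hp3⟩
    simp only at hp1 hp2 hp3 ⊢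
    have hxn : x n = x (n + p) := by
      have := hp2 0
      simpa using this.symm
    have hble : b ≤ n + p := Nat.find_le ⟨n, by omega, hxn⟩
    have hbge : n + p ≤ b := by
      by_contra hcon
      push_neg at hcon
      have ha1 : (a : ℕ) ∈ Set.Iio (n + p) := Set.mem_Iio.mpr (by omega)
      have ha2 : a + (b - a) ∈ Set.Iio (n + p) := Set.mem_Iio.mpr (by omega)
      have := hp3 ha1 ha2 hab'
      omega
    have heq : n + p = b := by omega
    have hn : n = a := by
      have hxna : x n = x a := by
        have hba : a + (b - a) = b := by omega
        rw [hxn, heq, ← hba]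
        exact hab'.symm
      exact hInj (Set.mem_Iio.mpr (by omega)) (Set.mem_Iio.mpr hab) hxna
    have : p = b - a := by omega
    exact Prod.ext hn this
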